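/- arXiv:2312.02339 — 10 statements merged into one kernel-verified Lean document; each statement's English description precedes it below -/
import Mathlib

section
/- A linear map W: ℝ^(n×k) → ℝ^(n'×k) satisfies W(XS) = W(X)S for all diagonal matrices S with ±1 diagonal entries if and only if there exist linear maps W₁,...,W_k : ℝⁿ → ℝ^(n') such that W(X) has j-th column equal to W_j applied to the j-th column of X, for all X. -/
/-- Embed a vector as the `j`-th column of a matrix (other columns zero). -/
private def injCol (n k : ℕ) (j : Fin k) :
    (Fin n → ℝ) →ₗ[ℝ] Matrix (Fin n) (Fin k) ℝ where
  toFun v := fun i' l => if l = j then v i' else 0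
  map_add' v w := by
    funext i' l
    change (if l = j then (v + w) i' else 0)
      = (if l = j then v i' else 0) + (if l = j then w i' else 0)
    by_cases h : l = j <;> simp [Matrix.add_apply, h]
  map_smul' c v := by
    funext i' l
    change (if l = j then (c • v) i' else 0) = c * (if l = j then v i' else 0)
    by_cases h : l = j <;> simp [Matrix.smul_apply, h]

private theorem injCol_apply (n k : ℕ) (j : Fin k) (v : Fin n → ℝ) (i' : Fin n) (l : Fin k) :
    injCol n k j v i' l = if l = j then v i' else 0 := rfl

/-- A linear map `W : ℝ^(n×k) → ℝ^(n'×k)` is sign equivariant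
(`W (X S) = W X * S` for all diagonal ±1 matrices `S`) iff there are linear maps
`W₁, …, W_k : ℝⁿ → ℝ^(n')` acting columnwise. -/
theorem stmt0 (n k n' : ℕ)
    (W : Matrix (Fin n) (Fin k) ℝ →ₗ[ℝ] Matrix (Fin n') (Fin k) ℝ) :
    (∀ (s : Fin k → ℝ), (∀ j, s j = 1 ∨ s j = -1) →
      ∀ X, W (X * Matrix.diagonal s) = W X * Matrix.diagonal s)
    ↔ ∃ Ws : Fin k → ((Fin n → ℝ) →ₗ[ℝ] (Fin n' → ℝ)),
        ∀ X (i : Fin n') (j : Fin k),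
          W X i j = Ws j (fun i' => X i' j) i := by
  constructor
  · intro h
    refine ⟨fun j =>
      { toFun := fun v => fun i => W (injCol n k j v) i j
        map_add' := fun v w => by
          funext i; simp [Matrix.add_apply]
        map_smul' := fun c v => by
          funext i; simp [Matrix.smul_apply] }, ?_⟩
    intro X i j
    set s : Fin k → ℝ := fun l => if l = j then 1 else -1 with hs_def
    have hs : ∀ l, s l = 1 ∨ s l = -1 := by
      intro l; by_cases h' : l = j <;> simp [hs_def, h']
    have key := h s hs X
    have hX : X * Matrix.diagonal s
        = (2 : ℝ) • injCol n k j (fun i' => X i' j) - X := by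
      funext i' l
      by_cases h' : l = j
      · subst h'
        simp [Matrix.mul_diagonal, hs_def, Matrix.sub_apply,
          Matrix.smul_apply, LinearMap.coe_mk, AddHom.coe_mk, injCol_apply]
        ring
      · simp [Matrix.mul_diagonal, hs_def, h', Matrix.sub_apply,
          Matrix.smul_apply, LinearMap.coe_mk, AddHom.coe_mk, injCol_apply]
    rw [hX] at key
    have key2 := congrFun (congrFun key i) j
    simp [Matrix.sub_apply, Matrix.smul_apply, Matrix.mul_diagonal,
      hs_def] at key2
    -- key2 : 2 * W (injCol ...) i j - W X i j = W X i j
    dsimp only [LinearMap.coe_mk, AddHom.coe_mk]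
    linarith [key2]
  · rintro ⟨Ws, hWs⟩ s hs X
    funext i j
    have h1 : (fun i' => (X * Matrix.diagonal s) i' j)
        = s j • (fun i' => X i' j) := by
      funext i'
      simp [Matrix.mul_diagonal, mul_comm]
    rw [hWs (X * Matrix.diagonal s) i j, h1, map_smul]
    rw [Matrix.mul_diagonal, hWs X i j]
    simp [mul_comm]
end

section
/- If a linear map W: ℝ^(n×k) → ℝ^(n'×k) is sign equivariant, then for every output index (i',j') and every input index (i,j) with j ≠ j', the coefficient of X_{i,j} in W(X)_{i',j'} is zero; i.e., W(X)_{i',j'} depends only on the j'-th column of X. -/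
/-- If a linear map `W` is sign equivariant, then the coefficient of
`X_{i,j}` in `W(X)_{i',j'}` is zero whenever `j ≠ j'`; i.e. `W(X)_{i',j'}` depends
only on column `j'` of `X`. -/
theorem stmt1 (n k n' : ℕ)
    (W : Matrix (Fin n) (Fin k) ℝ →ₗ[ℝ] Matrix (Fin n') (Fin k) ℝ)
    (hW : ∀ (s : Fin k → ℝ), (∀ j, s j = 1 ∨ s j = -1) →
      ∀ X, W (X * Matrix.diagonal s) = W X * Matrix.diagonal s) :
    ∀ (i : Fin n) (j : Fin k) (i' : Fin n') (j' : Fin k), j ≠ j' →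
      W (Matrix.single i j 1) i' j' = 0 := by
  intro i j i' j' hjj'
  set s : Fin k → ℝ := fun l => if l = j then -1 else 1 with hs
  have hsign : ∀ l, s l = 1 ∨ s l = -1 := by
    intro l; by_cases h : l = j <;> simp [hs, h]
  have hE : (Matrix.single i j 1 : Matrix (Fin n) (Fin k) ℝ) * Matrix.diagonal s
      = -(Matrix.single i j 1) := by
    ext a b
    simp only [Matrix.mul_diagonal, Matrix.neg_apply, hs]
    by_cases hb : b = j
    · subst hb; simp
    · simp [Matrix.single, hb, Ne.symm hb]
  have h := congrFun (congrFun (hW s hsign (Matrix.single i j 1)) i') j'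
  rw [hE] at h
  have hsj' : s j' = 1 := by simp [hs, Ne.symm hjj']
  simp only [map_neg, Matrix.neg_apply, Matrix.mul_diagonal, hsj', mul_one] at h
  linarith
end

section
/- A polynomial map p: ℝ^k → ℝ^k is sign equivariant (p(Sv) = S p(v) for all diagonal sign matrices S) if and only if there exists a sign invariant polynomial map p_inv: ℝ^k → ℝ^k such that p(v) = v ⊙ p_inv(v), where ⊙ denotes the elementwise (Hadamard) product. -/
open MvPolynomial

section aux

variable {k : ℕ}

/-- Negating one variable. -/
noncomputable def negVar (i : Fin k) : MvPolynomial (Fin k) ℝ →ₐ[ℝ] MvPolynomial (Fin k) ℝ :=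
  bind₁ (fun j : Fin k => if j = i then -X j else X j)

lemma eval_negVar (i : Fin k) (p : MvPolynomial (Fin k) ℝ) (v : Fin k → ℝ) :
    eval v (negVar i p) = eval (fun j => (if j = i then (-1 : ℝ) else 1) * v j) p := by
  unfold negVar
  show eval₂Hom (RingHom.id ℝ) v _ = _
  rw [eval₂Hom_bind₁]
  have hfun : (fun j : Fin k =>
      eval₂Hom (RingHom.id ℝ) v (if j = i then (-X j : MvPolynomial (Fin k) ℝ) else X j))
      = (fun j => (if j = i then (-1 : ℝ) else 1) * v j) := by
    funext j
    by_cases hj : j = i <;> simp [hj]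
  show eval _ p = _
  rw [hfun]

lemma coeff_negVar (i : Fin k) (p : MvPolynomial (Fin k) ℝ) (m : Fin k →₀ ℕ) :
    coeff m (negVar i p) = (-1 : ℝ) ^ (m i) * coeff m p := by
  induction p using MvPolynomial.induction_on' with
  | monomial d c =>
    unfold negVar
    rw [bind₁_monomial]
    have h1 : ∀ j ∈ d.support,
        (if j = i then -X j else X j : MvPolynomial (Fin k) ℝ) ^ d j
          = C (if j = i then (-1 : ℝ) ^ (d j) else 1) * X j ^ d j := by
      intro j _
      split_ifs with hj
      · rw [neg_pow]
        congr 1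
        rw [map_pow, map_neg, map_one]
      · rw [map_one, one_mul]
    rw [Finset.prod_congr rfl h1, Finset.prod_mul_distrib, ← map_prod,
      Finset.prod_ite_eq' d.support i (fun j => (-1 : ℝ) ^ d j)]
    have hid : (if i ∈ d.support then (-1 : ℝ) ^ d i else 1) = (-1 : ℝ) ^ d i := by
      split_ifs with h
      · rfl
      · simp [Finsupp.notMem_support_iff.mp h]
    rw [hid]
    have hmono : (C c : MvPolynomial (Fin k) ℝ) *
        (C ((-1 : ℝ) ^ d i) * ∏ j ∈ d.support, X j ^ d j)
        = monomial d ((-1 : ℝ) ^ d i * c) := by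
      rw [monomial_eq, Finsupp.prod]
      rw [map_mul]
      ring
    rw [hmono, coeff_monomial, coeff_monomial]
    split_ifs with h
    · subst h; ring
    · ring
  | add q r hq hr =>
    simp only [map_add, coeff_add, hq, hr]; ring

end aux

/-- A polynomial map `p : ℝ^k → ℝ^k` is sign equivariant iff
`p(v) = v ⊙ p_inv(v)` for some sign invariant polynomial map `p_inv`. -/
theorem stmt4 (k : ℕ) (p : Fin k → MvPolynomial (Fin k) ℝ) :
    (∀ (s : Fin k → ℝ), (∀ i, s i = 1 ∨ s i = -1) →
      ∀ (v : Fin k → ℝ) (l : Fin k),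
        eval (fun i => s i * v i) (p l) = s l * eval v (p l))
    ↔ ∃ pinv : Fin k → MvPolynomial (Fin k) ℝ,
        (∀ (s : Fin k → ℝ), (∀ i, s i = 1 ∨ s i = -1) →
          ∀ (v : Fin k → ℝ) (l : Fin k),
            eval (fun i => s i * v i) (pinv l) = eval v (pinv l)) ∧
        (∀ (v : Fin k → ℝ) (l : Fin k), eval v (p l) = v l * eval v (pinv l)) := by
  constructor
  · intro h
    -- Polynomial identities from the functional hypothesis
    have key : ∀ (l i : Fin k),
        negVar i (p l) = C (if l = i then (-1 : ℝ) else 1) * p l := by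
      intro l i
      apply MvPolynomial.funext
      intro v
      rw [eval_negVar, map_mul, eval_C]
      have hsval : ∀ j, (if j = i then (-1 : ℝ) else 1) = 1 ∨ (if j = i then (-1 : ℝ) else 1) = -1 := by
        intro j
        by_cases hj : j = i <;> simp [hj]
      exact h (fun j => if j = i then (-1 : ℝ) else 1) hsval v l
    have hco : ∀ (l i : Fin k) (m : Fin k →₀ ℕ),
        (-1 : ℝ) ^ (m i) * coeff m (p l) = (if l = i then (-1 : ℝ) else 1) * coeff m (p l) := by
      intro l i m
      have := congrArg (coeff m) (key l i)
      rwa [coeff_negVar, coeff_C_mul] at this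
    have hodd : ∀ (l : Fin k) (m : Fin k →₀ ℕ), m ∈ (p l).support → Odd (m l) := by
      intro l m hm
      have hc : coeff m (p l) ≠ 0 := mem_support_iff.mp hm
      have hx := hco l l m
      rw [if_pos rfl] at hx
      have h1 : (-1 : ℝ) ^ (m l) = -1 := mul_right_cancel₀ hc hx
      rcases Nat.even_or_odd (m l) with he | ho
      · exfalso
        rw [he.neg_one_pow] at h1
        norm_num at h1
      · exact ho
    have heven : ∀ (l i : Fin k), l ≠ i → ∀ m ∈ (p l).support, Even (m i) := by
      intro l i hli m hm
      have hc : coeff m (p l) ≠ 0 := mem_support_iff.mp hm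
      have hx := hco l i m
      rw [if_neg hli] at hx
      have h1 : (-1 : ℝ) ^ (m i) = 1 := mul_right_cancel₀ hc hx
      exact (neg_one_pow_eq_one_iff_even (by norm_num : (-1 : ℝ) ≠ 1)).mp h1
    set pinv : Fin k → MvPolynomial (Fin k) ℝ := fun l =>
      ∑ m ∈ (p l).support, monomial (m - Finsupp.single l 1) (coeff m (p l)) with hpinv
    have heval : ∀ (l : Fin k) (v : Fin k → ℝ),
        eval v (pinv l) = ∑ m ∈ (p l).support,
          coeff m (p l) * ∏ i, v i ^ ((m - Finsupp.single l 1 : Fin k →₀ ℕ) i) := by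
      intro l v
      rw [hpinv, map_sum]
      refine Finset.sum_congr rfl fun m _ => ?_
      rw [eval_monomial, Finsupp.prod_pow]
    refine ⟨pinv, ?_, ?_⟩
    · -- sign invariance
      intro s hs v l
      rw [heval, heval]
      refine Finset.sum_congr rfl fun m hm => ?_
      congr 1
      refine Finset.prod_congr rfl fun i _ => ?_
      rw [mul_pow]
      have heven' : Even ((m - Finsupp.single l 1 : Fin k →₀ ℕ) i) := by
        rw [Finsupp.tsub_apply, Finsupp.single_apply]
        by_cases hil : l = i
        · subst hil
          rw [if_pos rfl]
          exact Nat.Odd.sub_odd (hodd l m hm) odd_one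
        · rw [if_neg hil, Nat.sub_zero]
          exact heven l i hil m hm
      have hone : s i ^ ((m - Finsupp.single l 1 : Fin k →₀ ℕ) i) = 1 := by
        rcases hs i with h1 | h1
        · rw [h1, one_pow]
        · rw [h1, heven'.neg_one_pow]
      rw [hone, one_mul]
    · -- factorization
      intro v l
      rw [eval_eq' v (p l), heval, Finset.mul_sum]
      refine Finset.sum_congr rfl fun m hm => ?_
      have hml : m l - 1 + 1 = m l := Nat.succ_pred_eq_of_pos (hodd l m hm).pos
      have hprod : ∏ i, v i ^ m i = v l * ∏ i, v i ^ ((m - Finsupp.single l 1 : Fin k →₀ ℕ) i) := by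
        rw [Fintype.prod_eq_mul_prod_compl l (fun i => v i ^ m i),
          Fintype.prod_eq_mul_prod_compl l (fun i => v i ^ ((m - Finsupp.single l 1 : Fin k →₀ ℕ) i))]
        have h1 : ((m - Finsupp.single l 1 : Fin k →₀ ℕ) l) = m l - 1 := by
          rw [Finsupp.tsub_apply, Finsupp.single_apply, if_pos rfl]
        have h2 : ∀ i ∈ ({l}ᶜ : Finset (Fin k)),
            v i ^ ((m - Finsupp.single l 1 : Fin k →₀ ℕ) i) = v i ^ m i := by
          intro i hi
          have hne : i ≠ l := by simpa using hi
          rw [Finsupp.tsub_apply, Finsupp.single_apply, if_neg (Ne.symm hne), Nat.sub_zero]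
        rw [Finset.prod_congr rfl h2, h1, ← mul_assoc]
        congr 1
        conv_lhs => rw [← hml]
        rw [pow_succ']
      rw [hprod]
      ring
  · rintro ⟨pinv, hinv, heq⟩ s hs v l
    have h1 := heq (fun i => s i * v i) l
    have h2 := heq v l
    rw [h1, h2, hinv s hs v l]
    ring
end

section
/- For a polynomial p: ℝ^k → ℝ^k with l-th coordinate p(v)_l = Σ W^{(l)}_{d₁,...,d_k} v₁^{d₁}···v_k^{d_k}, p is sign equivariant if and only if for every l and every multi-index (d₁,...,d_k), the coefficient W^{(l)}_{d₁,...,d_k} is nonzero only when d_l is odd and all other d_i (i ≠ l) are even. -/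
open MvPolynomial

private lemma eval_scale {k : ℕ} (v s : Fin k → ℝ) (p : MvPolynomial (Fin k) ℝ) :
    eval v (bind₁ (fun i => (C (s i) : MvPolynomial (Fin k) ℝ) * X i) p)
      = eval (fun i => s i * v i) p := by
  rw [show (eval v : MvPolynomial (Fin k) ℝ →+* ℝ) = eval₂Hom (RingHom.id ℝ) v from rfl,
    eval₂Hom_bind₁]
  simp

private lemma coeff_scale {k : ℕ} (s : Fin k → ℝ) (p : MvPolynomial (Fin k) ℝ)
    (d : Fin k →₀ ℕ) :
    coeff d (bind₁ (fun i => (C (s i) : MvPolynomial (Fin k) ℝ) * X i) p)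
      = (∏ i, s i ^ d i) * coeff d p := by
  induction p using MvPolynomial.induction_on generalizing d with
  | C a =>
      rw [bind₁_C_right]
      rcases eq_or_ne d 0 with h | h
      · subst h; simp
      · rw [coeff_C, if_neg (by simpa using (Ne.symm h)), mul_zero]
  | add p q hp hq => simp [coeff_add, hp, hq, mul_add]
  | mul_X p i hp =>
      rw [map_mul, bind₁_X_right]
      have : bind₁ (fun i => (C (s i) : MvPolynomial (Fin k) ℝ) * X i) p * (C (s i) * X i)
          = C (s i) * (bind₁ (fun i => (C (s i) : MvPolynomial (Fin k) ℝ) * X i) p * X i) := by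
        ring
      rw [this, coeff_C_mul, coeff_mul_X', coeff_mul_X']
      by_cases hi : i ∈ d.support
      · rw [if_pos hi, if_pos hi, hp]
        set e : Fin k →₀ ℕ := d - Finsupp.single i 1 with he
        have hprod : s i * ∏ j, s j ^ e j = ∏ j, s j ^ d j := by
          rw [← Finset.mul_prod_erase Finset.univ _ (Finset.mem_univ i),
            ← Finset.mul_prod_erase Finset.univ (fun j => s j ^ d j) (Finset.mem_univ i),
            ← mul_assoc]
          congr 1
          · have h1 : e i = d i - 1 := by
              rw [he, Finsupp.tsub_apply, Finsupp.single_apply, if_pos rfl]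
            have hdi : d i ≠ 0 := Finsupp.mem_support_iff.mp hi
            rw [h1, ← pow_succ']
            congr 1
            omega
          · apply Finset.prod_congr rfl
            intro j hj
            have hji : j ≠ i := (Finset.mem_erase.mp hj).1
            have h2 : e j = d j := by
              rw [he, Finsupp.tsub_apply, Finsupp.single_apply, if_neg (Ne.symm hji),
                Nat.sub_zero]
            rw [h2]
        rw [← mul_assoc, hprod]
      · rw [if_neg hi, if_neg hi, mul_zero, mul_zero]

private lemma prod_sign {k : ℕ} (s : Fin k → ℝ) (hs : ∀ i, s i = 1 ∨ s i = -1)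
    (d : Fin k →₀ ℕ) (l : Fin k) (hodd : Odd (d l)) (heven : ∀ i, i ≠ l → Even (d i)) :
    ∏ i, s i ^ d i = s l := by
  rw [← Finset.mul_prod_erase Finset.univ _ (Finset.mem_univ l)]
  have h1 : s l ^ d l = s l := by
    rcases hs l with h | h
    · rw [h, one_pow]
    · rw [h, hodd.neg_one_pow]
  have h2 : ∏ i ∈ Finset.univ.erase l, s i ^ d i = 1 := by
    apply Finset.prod_eq_one
    intro i hi
    have hil : i ≠ l := (Finset.mem_erase.mp hi).1
    rcases hs i with h | h
    · rw [h, one_pow]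
    · rw [h, (heven i hil).neg_one_pow]
  rw [h1, h2, mul_one]

/-- A polynomial map `p : ℝ^k → ℝ^k` is sign equivariant iff each
nonzero coefficient `W^{(l)}_{d}` has `d l` odd and `d i` even for all `i ≠ l`. -/
theorem stmt5 (k : ℕ) (p : Fin k → MvPolynomial (Fin k) ℝ) :
    (∀ (s : Fin k → ℝ), (∀ i, s i = 1 ∨ s i = -1) →
      ∀ (v : Fin k → ℝ) (l : Fin k),
        eval (fun i => s i * v i) (p l) = s l * eval v (p l))
    ↔ ∀ (l : Fin k) (d : Fin k →₀ ℕ), coeff d (p l) ≠ 0 →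
        Odd (d l) ∧ ∀ i, i ≠ l → Even (d i) := by
  constructor
  · intro h l d hd
    -- key: for every sign vector s, (∏ i, s i ^ d i) = s l
    have key : ∀ (s : Fin k → ℝ), (∀ i, s i = 1 ∨ s i = -1) → (∏ i, s i ^ d i) = s l := by
      intro s hs
      have hpoly : bind₁ (fun i => (C (s i) : MvPolynomial (Fin k) ℝ) * X i) (p l)
          = C (s l) * p l := by
        apply MvPolynomial.funext
        intro v
        rw [eval_scale, map_mul, eval_C, h s hs v l]
      have := congrArg (coeff d) hpoly
      rw [coeff_scale, coeff_C_mul] at this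
      exact mul_right_cancel₀ hd this
    constructor
    · -- d l is odd
      have := key (fun i => if i = l then -1 else 1) (by intro i; by_cases hi : i = l <;> simp [hi])
      simp only [if_pos rfl] at this
      have hprod : (∏ i, (if i = l then (-1 : ℝ) else 1) ^ d i) = (-1 : ℝ) ^ d l := by
        rw [← Finset.mul_prod_erase Finset.univ _ (Finset.mem_univ l), if_pos rfl]
        rw [Finset.prod_eq_one, mul_one]
        intro i hi
        rw [if_neg (Finset.mem_erase.mp hi).1, one_pow]
      rw [hprod] at this
      rcases Nat.even_or_odd (d l) with he | ho
      · exfalso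
        rw [he.neg_one_pow] at this
        norm_num at this
      · exact ho
    · intro i hil
      have := key (fun j => if j = i then -1 else 1) (by intro j; by_cases hj : j = i <;> simp [hj])
      simp only [if_neg hil.symm] at this
      have hprod : (∏ j, (if j = i then (-1 : ℝ) else 1) ^ d j) = (-1 : ℝ) ^ d i := by
        rw [← Finset.mul_prod_erase Finset.univ _ (Finset.mem_univ i), if_pos rfl]
        rw [Finset.prod_eq_one, mul_one]
        intro j hj
        rw [if_neg (Finset.mem_erase.mp hj).1, one_pow]
      rw [hprod] at this
      rcases Nat.even_or_odd (d i) with he | ho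
      · exact he
      · exfalso
        rw [ho.neg_one_pow] at this
        norm_num at this
  · intro h s hs v l
    rw [eval_eq' (fun i => s i * v i) (p l), eval_eq' v (p l), Finset.mul_sum]
    apply Finset.sum_congr rfl
    intro d hd
    have hcd : coeff d (p l) ≠ 0 := mem_support_iff.mp hd
    obtain ⟨hodd, heven⟩ := h l d hcd
    have : (∏ i, (s i * v i) ^ d i) = s l * ∏ i, v i ^ d i := by
      rw [show (∏ i, (s i * v i) ^ d i) = (∏ i, s i ^ d i) * ∏ i, v i ^ d i by
        rw [← Finset.prod_mul_distrib]; exact Finset.prod_congr rfl fun i _ => mul_pow _ _ _]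
      rw [prod_sign s hs d l hodd heven]
    rw [this]
    ring
end

section
/- A polynomial map p: ℝ^(n×k) → ℝ from matrices to reals is invariant under independent sign flips of columns (p(VS) = p(V) for all diagonal sign matrices S ∈ diag({-1,1}^k)) if and only if every monomial with nonzero coefficient uses each column's variables an even total number of times; equivalently, there is a polynomial q on ℝ^(n×n×k) with p(V) = q([V_{i₁,j}·V_{i₂,j}]_{i₁,i₂∈[n], j∈[k]}). -/
open MvPolynomial

/- auxiliary lemmas -/

lemma prod_flatMap' {α β M : Type*} [CommMonoid M] (f : β → M) (g : α → List β) :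
    ∀ l : List α, ((l.flatMap g).map f).prod = (l.map fun a => ((g a).map f).prod).prod := by
  intro l
  induction l with
  | nil => simp
  | cons a t ih => simp [List.flatMap_cons, List.map_append, List.prod_append, ih]

lemma aeval_scale_monomial {σ : Type*} (c : σ → ℝ) (e : σ →₀ ℕ) (a : ℝ) :
    aeval (fun i => (C (c i) * X i : MvPolynomial σ ℝ)) (monomial e a)
      = monomial e (a * ∏ i ∈ e.support, c i ^ e i) := by
  rw [aeval_monomial, monomial_eq]
  have h1 : (e.prod fun i m => (C (c i) * X i : MvPolynomial σ ℝ) ^ m)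
      = (∏ i ∈ e.support, (C (c i ^ e i) : MvPolynomial σ ℝ))
        * e.prod fun i m => (X i : MvPolynomial σ ℝ) ^ m := by
    rw [Finsupp.prod, Finsupp.prod, ← Finset.prod_mul_distrib]
    refine Finset.prod_congr rfl fun i _ => ?_
    rw [mul_pow, C_pow]
  rw [h1]
  have h2 : (∏ i ∈ e.support, (C (c i ^ e i) : MvPolynomial σ ℝ))
      = C (∏ i ∈ e.support, c i ^ e i) := by
    rw [map_prod]
  rw [h2]
  push_cast [algebraMap_eq]
  rw [map_mul]
  ring

lemma coeff_aeval_scale {σ : Type*} (c : σ → ℝ) (p : MvPolynomial σ ℝ) (d : σ →₀ ℕ) :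
    coeff d (aeval (fun i => (C (c i) * X i : MvPolynomial σ ℝ)) p)
      = coeff d p * ∏ i ∈ d.support, c i ^ d i := by
  conv_lhs => rw [← support_sum_monomial_coeff p]
  classical
  rw [map_sum, coeff_sum]
  simp only [aeval_scale_monomial, coeff_monomial]
  rw [Finset.sum_ite_eq' p.support d (fun e => coeff e p * ∏ i ∈ e.support, c i ^ e i)]
  by_cases h : d ∈ p.support
  · simp [h]
  · simp only [h, if_false]
    rw [MvPolynomial.notMem_support_iff.mp h, zero_mul]

noncomputable def colProd (n k : ℕ) (j : Fin k) : List (Fin n) → MvPolynomial (Fin n × Fin n × Fin k) ℝ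
  | [] => 1
  | [_] => 1
  | a :: b :: t => X (a, b, j) * colProd n k j t

lemma colProd_eval (n k : ℕ) (j : Fin k) (V : Matrix (Fin n) (Fin k) ℝ) :
    ∀ L : List (Fin n), Even L.length →
      eval (fun t : Fin n × Fin n × Fin k => V t.1 t.2.2 * V t.2.1 t.2.2) (colProd n k j L)
        = (L.map fun i => V i j).prod := by
  intro L
  induction L using colProd.induct with
  | case1 => intro _; simp [colProd]
  | case2 a => intro h; simp at h
  | case3 a b t ih =>
      intro h
      have ht : Even t.length := by
        simp only [List.length_cons] at h
        rw [Nat.even_iff] at h ⊢; omega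
      rw [colProd, map_mul, eval_X, ih ht]
      simp [mul_assoc]

noncomputable def colList (n k : ℕ) (d : (Fin n × Fin k) →₀ ℕ) (j : Fin k) : List (Fin n) :=
  (List.finRange n).flatMap fun i => List.replicate (d (i, j)) i

lemma colList_length (n k : ℕ) (d : (Fin n × Fin k) →₀ ℕ) (j : Fin k) :
    (colList n k d j).length = ∑ i : Fin n, d (i, j) := by
  rw [colList, List.length_flatMap, Fin.sum_univ_def]
  congr 1
  simp [Function.comp]

lemma colList_prod (n k : ℕ) (d : (Fin n × Fin k) →₀ ℕ) (j : Fin k)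
    (V : Matrix (Fin n) (Fin k) ℝ) :
    ((colList n k d j).map fun i => V i j).prod = ∏ i : Fin n, V i j ^ d (i, j) := by
  rw [colList, prod_flatMap', Fin.prod_univ_def]
  congr 1
  refine List.map_congr_left fun i _ => ?_
  rw [List.map_replicate, List.prod_replicate]

/-- A polynomial `p : ℝ^(n×k) → ℝ` is invariant under independent sign
flips of columns iff every monomial with nonzero coefficient uses each column's
variables an even total number of times; equivalently, iff there is a polynomial `q`
on `ℝ^(n×n×k)` with `p(V) = q([V_{i₁,j} V_{i₂,j}])`. -/
theorem stmt6 (n k : ℕ) (p : MvPolynomial (Fin n × Fin k) ℝ) :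
    ((∀ (s : Fin k → ℝ), (∀ j, s j = 1 ∨ s j = -1) →
        ∀ V : Matrix (Fin n) (Fin k) ℝ,
          eval (fun ij => s ij.2 * V ij.1 ij.2) p = eval (fun ij => V ij.1 ij.2) p)
      ↔ ∀ d : (Fin n × Fin k) →₀ ℕ, coeff d p ≠ 0 →
          ∀ j : Fin k, Even (∑ i : Fin n, d (i, j)))
    ∧
    ((∀ (s : Fin k → ℝ), (∀ j, s j = 1 ∨ s j = -1) →
        ∀ V : Matrix (Fin n) (Fin k) ℝ,
          eval (fun ij => s ij.2 * V ij.1 ij.2) p = eval (fun ij => V ij.1 ij.2) p)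
      ↔ ∃ q : MvPolynomial (Fin n × Fin n × Fin k) ℝ,
          ∀ V : Matrix (Fin n) (Fin k) ℝ,
            eval (fun ij => V ij.1 ij.2) p
              = eval (fun t => V t.1 t.2.2 * V t.2.1 t.2.2) q) := by
  have A2B : (∀ (s : Fin k → ℝ), (∀ j, s j = 1 ∨ s j = -1) →
        ∀ V : Matrix (Fin n) (Fin k) ℝ,
          eval (fun ij => s ij.2 * V ij.1 ij.2) p = eval (fun ij => V ij.1 ij.2) p) →
      ∀ d : (Fin n × Fin k) →₀ ℕ, coeff d p ≠ 0 →
          ∀ j : Fin k, Even (∑ i : Fin n, d (i, j)) := by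
    intro hA d hd j0
    set s : Fin k → ℝ := fun j => if j = j0 then -1 else 1 with hs_def
    have hs : ∀ j, s j = 1 ∨ s j = -1 := by
      intro j; by_cases h : j = j0 <;> simp [hs_def, h]
    have hpoly : aeval (fun ij : Fin n × Fin k =>
        (C (s ij.2) * X ij : MvPolynomial (Fin n × Fin k) ℝ)) p = p := by
      apply MvPolynomial.funext
      intro x
      have hx := hA s hs (Matrix.of fun i j => x (i, j))
      rw [aeval_def, eval_eval₂]
      have hcomp : ((eval x).comp (algebraMap ℝ (MvPolynomial (Fin n × Fin k) ℝ)))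
          = RingHom.id ℝ := by
        ext r; simp [algebraMap_eq]
      rw [hcomp, eval₂_id]
      simpa using hx
    have hco := congrArg (coeff d) hpoly
    rw [coeff_aeval_scale] at hco
    have hprod : (∏ i ∈ d.support, s i.2 ^ d i)
        = (-1 : ℝ) ^ (∑ i : Fin n, d (i, j0)) := by
      rw [Finset.prod_subset (Finset.subset_univ d.support)
        (fun x _ hx => by rw [Finsupp.notMem_support_iff.mp hx, pow_zero])]
      rw [Fintype.prod_prod_type]
      rw [Finset.prod_comm]
      have : ∀ b : Fin k, (∏ a : Fin n, s b ^ d (a, b)) = s b ^ ∑ a : Fin n, d (a, b) :=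
        fun b => Finset.prod_pow_eq_pow_sum _ _ _
      simp only [this]
      rw [Finset.prod_eq_single j0]
      · simp [hs_def]
      · intro b _ hb; simp [hs_def, hb]
      · intro h; exact absurd (Finset.mem_univ j0) h
    rw [hprod] at hco
    have hone : (-1 : ℝ) ^ (∑ i : Fin n, d (i, j0)) = 1 := by
      have := mul_left_cancel₀ hd (hco.trans (mul_one (coeff d p)).symm)
      linarith [this]
    exact (neg_one_pow_eq_one_iff_even (by norm_num : (-1 : ℝ) ≠ 1)).mp hone
  have Q2A : (∃ q : MvPolynomial (Fin n × Fin n × Fin k) ℝ,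
          ∀ V : Matrix (Fin n) (Fin k) ℝ,
            eval (fun ij => V ij.1 ij.2) p
              = eval (fun t => V t.1 t.2.2 * V t.2.1 t.2.2) q) →
      (∀ (s : Fin k → ℝ), (∀ j, s j = 1 ∨ s j = -1) →
        ∀ V : Matrix (Fin n) (Fin k) ℝ,
          eval (fun ij => s ij.2 * V ij.1 ij.2) p = eval (fun ij => V ij.1 ij.2) p) := by
    rintro ⟨q, hq⟩ s hs V
    have hsq : ∀ j, s j * s j = 1 := by
      intro j; rcases hs j with h | h <;> rw [h] <;> norm_num
    have h2 := hq (Matrix.of fun i j => s j * V i j)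
    simp only [Matrix.of_apply] at h2
    have henv : (fun t : Fin n × Fin n × Fin k =>
        s t.2.2 * V t.1 t.2.2 * (s t.2.2 * V t.2.1 t.2.2))
        = fun t : Fin n × Fin n × Fin k => V t.1 t.2.2 * V t.2.1 t.2.2 := by
      funext t
      calc s t.2.2 * V t.1 t.2.2 * (s t.2.2 * V t.2.1 t.2.2)
          = (s t.2.2 * s t.2.2) * (V t.1 t.2.2 * V t.2.1 t.2.2) := by ring
        _ = V t.1 t.2.2 * V t.2.1 t.2.2 := by rw [hsq, one_mul]
    rw [h2, henv, hq V]
  have B2Q : (∀ d : (Fin n × Fin k) →₀ ℕ, coeff d p ≠ 0 →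
          ∀ j : Fin k, Even (∑ i : Fin n, d (i, j))) →
      (∃ q : MvPolynomial (Fin n × Fin n × Fin k) ℝ,
          ∀ V : Matrix (Fin n) (Fin k) ℝ,
            eval (fun ij => V ij.1 ij.2) p
              = eval (fun t => V t.1 t.2.2 * V t.2.1 t.2.2) q) := by
    intro hB
    refine ⟨∑ d ∈ p.support, C (coeff d p) * ∏ j : Fin k, colProd n k j (colList n k d j), ?_⟩
    intro V
    rw [eval_eq, map_sum]
    refine Finset.sum_congr rfl fun d hd => ?_
    rw [map_mul, eval_C, eval_prod]
    congr 1
    have hcol : ∀ j : Fin k,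
        eval (fun t : Fin n × Fin n × Fin k => V t.1 t.2.2 * V t.2.1 t.2.2)
          (colProd n k j (colList n k d j)) = ∏ i : Fin n, V i j ^ d (i, j) := by
      intro j
      rw [colProd_eval n k j V _ (by
        rw [colList_length]
        exact hB d (MvPolynomial.mem_support_iff.mp hd) j), colList_prod]
    rw [Finset.prod_subset (Finset.subset_univ d.support)
      (f := fun i : Fin n × Fin k => V i.1 i.2 ^ d i)
      (fun x _ hx => by simp [Finsupp.notMem_support_iff.mp hx])]
    rw [Fintype.prod_prod_type, Finset.prod_comm]
    simp [hcol]
  exact ⟨⟨A2B, fun hB => Q2A (B2Q hB)⟩, fun hA => B2Q (A2B hA), Q2A⟩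
end

section
/- If m₁ + m₂ is odd, then the only linear map L: ℝ^(k^{m₁}) → ℝ^(k^{m₂}) between tensor spaces that is equivariant to diagonal sign actions (L(s·V) = s·(LV) for all s ∈ {-1,1}^k, where s acts on an order-m tensor by multiplying entry (i₁,...,i_m) by s_{i₁}···s_{i_m}) is the zero map. -/
/-- The action of a sign vector `s ∈ {-1,1}^k` on an order-`m` tensor in `ℝ^(k^m)`:
entry `(i₁,…,i_m)` is multiplied by `s_{i₁} ⋯ s_{i_m}`. -/
def signTensorAction {k m : ℕ} (s : Fin k → ℝ) (V : (Fin m → Fin k) → ℝ) :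
    (Fin m → Fin k) → ℝ :=
  fun idx => (∏ t : Fin m, s (idx t)) * V idx

lemma signTensorAction_neg_one {k m : ℕ} (V : (Fin m → Fin k) → ℝ) :
    signTensorAction (fun _ => (-1 : ℝ)) V = ((-1 : ℝ) ^ m) • V := by
  funext idx
  simp [signTensorAction]

/-- If `m₁ + m₂` is odd, the only sign equivariant linear map between
tensor spaces `ℝ^(k^{m₁}) → ℝ^(k^{m₂})` is the zero map. -/
theorem stmt7 (k m₁ m₂ : ℕ) (hodd : Odd (m₁ + m₂))
    (L : ((Fin m₁ → Fin k) → ℝ) →ₗ[ℝ] ((Fin m₂ → Fin k) → ℝ))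
    (hL : ∀ (s : Fin k → ℝ), (∀ i, s i = 1 ∨ s i = -1) →
      ∀ V, L (signTensorAction s V) = signTensorAction s (L V)) :
    L = 0 := by
  apply LinearMap.ext
  intro V
  have h := hL (fun _ => (-1 : ℝ)) (fun i => Or.inr rfl) V
  rw [signTensorAction_neg_one, signTensorAction_neg_one, map_smul] at h
  have hsign : ((-1 : ℝ) ^ m₂) * ((-1 : ℝ) ^ m₁) = -1 := by
    rw [← pow_add, add_comm]
    exact Odd.neg_one_pow hodd
  have h2 : -(L V) = L V := by
    have h' := congrArg (fun x => ((-1 : ℝ) ^ m₂) • x) h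
    simp only [smul_smul, hsign, neg_one_smul] at h'
    rw [← pow_add, show m₂ + m₂ = 2 * m₂ from (two_mul m₂).symm, pow_mul,
      neg_one_sq, one_pow, one_smul] at h'
    exact h'
  have h3 : L V = 0 := by
    funext x
    have hx := congrFun h2 x
    simp only [Pi.neg_apply] at hx
    simp only [Pi.zero_apply]
    linarith
  exact h3
end

section
/- The dimension of the real vector space of sign equivariant linear maps from ℝ^(k^{m₁}) to ℝ^(k^{m₂}) equals (1/2^k) Σ_{s ∈ {-1,1}^k} (s₁ + ... + s_k)^{m₁+m₂}. -/
open Finset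

/-- A sign vector: each entry is `1` or `-1`. -/
def IsSign {k : ℕ} (s : Fin k → ℝ) : Prop := ∀ i, s i = 1 ∨ s i = -1

/-- The character condition on a pair of multi-indices. -/
def Pok {k : ℕ} (m₁ m₂ : ℕ) (a : Fin m₂ → Fin k) (b : Fin m₁ → Fin k) : Prop :=
  ∀ s : Fin k → ℝ, IsSign s → (∏ t, s (a t)) = ∏ t, s (b t)

noncomputable instance {k m₁ m₂ : ℕ} (a : Fin m₂ → Fin k) (b : Fin m₁ → Fin k) :
    Decidable (Pok m₁ m₂ a b) := Classical.dec _

lemma prod_sq {k m : ℕ} {s : Fin k → ℝ} (hs : IsSign s) (a : Fin m → Fin k) :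
    (∏ t, s (a t)) * (∏ t, s (a t)) = 1 := by
  rw [← Finset.prod_mul_distrib]
  apply Finset.prod_eq_one
  intro t _
  rcases hs (a t) with h | h <;> rw [h] <;> norm_num

lemma prodSignMem {k m : ℕ} {s : Fin k → ℝ} (hs : IsSign s) (a : Fin m → Fin k) :
    (∏ t, s (a t)) = 1 ∨ (∏ t, s (a t)) = -1 :=
  mul_self_eq_one_iff.mp (prod_sq hs a)

lemma mem_piFinset_iff {k : ℕ} {s : Fin k → ℝ} :
    s ∈ Fintype.piFinset (fun _ : Fin k => ({-1, 1} : Finset ℝ)) ↔ IsSign s := by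
  rw [Fintype.mem_piFinset]
  constructor
  · intro h i; have := h i; simp at this; tauto
  · intro h i; have := h i; simp; tauto

lemma char_sum_of_P {k m₁ m₂ : ℕ} (a : Fin m₂ → Fin k) (b : Fin m₁ → Fin k)
    (h : Pok m₁ m₂ a b) :
    ∑ s ∈ Fintype.piFinset (fun _ : Fin k => ({-1, 1} : Finset ℝ)),
      (∏ t, s (a t)) * (∏ t, s (b t)) = 2 ^ k := by
  have h1 : ∀ s ∈ Fintype.piFinset (fun _ : Fin k => ({-1, 1} : Finset ℝ)),
      (∏ t, s (a t)) * (∏ t, s (b t)) = (1 : ℝ) := by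
    intro s hsmem
    have hsign := mem_piFinset_iff.mp hsmem
    rw [← h s hsign]
    exact prod_sq hsign a
  rw [Finset.sum_congr rfl h1, Finset.sum_const, nsmul_eq_mul, Fintype.card_piFinset]
  have hc : ({-1, 1} : Finset ℝ).card = 2 := Finset.card_pair (by norm_num)
  simp [hc]

lemma char_sum_of_notP {k m₁ m₂ : ℕ} (a : Fin m₂ → Fin k) (b : Fin m₁ → Fin k)
    (h : ¬ Pok m₁ m₂ a b) :
    ∑ s ∈ Fintype.piFinset (fun _ : Fin k => ({-1, 1} : Finset ℝ)),
      (∏ t, s (a t)) * (∏ t, s (b t)) = 0 := by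
  simp only [Pok, not_forall] at h
  obtain ⟨s₀, hs₀, hne⟩ := h
  have hχ₀ : (∏ t, s₀ (a t)) * (∏ t, s₀ (b t)) = -1 := by
    rcases prodSignMem hs₀ a with ha | ha <;> rcases prodSignMem hs₀ b with hb | hb <;>
      simp [ha, hb] at hne ⊢
  have key : ∑ s ∈ Fintype.piFinset (fun _ : Fin k => ({-1, 1} : Finset ℝ)),
      (∏ t, s (a t)) * (∏ t, s (b t))
      = ∑ s ∈ Fintype.piFinset (fun _ : Fin k => ({-1, 1} : Finset ℝ)),
        -((∏ t, s (a t)) * (∏ t, s (b t))) := by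
    apply Finset.sum_nbij' (fun s => fun i => s₀ i * s i) (fun s => fun i => s₀ i * s i)
    · intro s hsmem
      rw [mem_piFinset_iff] at *
      intro i
      rcases hs₀ i with h | h <;> rcases hsmem i with h' | h' <;> simp [h, h']
    · intro s hsmem
      rw [mem_piFinset_iff] at *
      intro i
      rcases hs₀ i with h | h <;> rcases hsmem i with h' | h' <;> simp [h, h']
    · intro s _
      funext i
      rcases hs₀ i with h | h <;> simp [h]
    · intro s _
      funext i
      rcases hs₀ i with h | h <;> simp [h]
    · intro s _
      show _ = -((∏ t, (s₀ (a t) * s (a t))) * ∏ t, (s₀ (b t) * s (b t)))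
      rw [Finset.prod_mul_distrib, Finset.prod_mul_distrib]
      linear_combination ((∏ t, s (a t)) * (∏ t, s (b t))) * hχ₀
  rw [Finset.sum_neg_distrib] at key
  linarith

/-- The subspace of sign equivariant linear maps `ℝ^(k^{m₁}) → ℝ^(k^{m₂})`. -/
noncomputable def signEquivMaps (k m₁ m₂ : ℕ) :
    Submodule ℝ (((Fin m₁ → Fin k) → ℝ) →ₗ[ℝ] ((Fin m₂ → Fin k) → ℝ)) where
  carrier := {L | ∀ (s : Fin k → ℝ), (∀ i, s i = 1 ∨ s i = -1) →
    ∀ V, L (signTensorAction s V) = signTensorAction s (L V)}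
  add_mem' := by
    intro a b ha hb s hs V
    funext idx
    simp [LinearMap.add_apply, ha s hs V, hb s hs V, signTensorAction, mul_add]
  zero_mem' := by
    intro s hs V
    funext idx
    simp [signTensorAction]
  smul_mem' := by
    intro c a ha s hs V
    funext idx
    simp [LinearMap.smul_apply, ha s hs V, signTensorAction]
    ring

/-- The submodule of matrices supported on pairs satisfying `Pok`. -/
def Wsub (k m₁ m₂ : ℕ) : Submodule ℝ (Matrix ((Fin m₂ → Fin k)) ((Fin m₁ → Fin k)) ℝ) where
  carrier := {M | ∀ a b, ¬ Pok m₁ m₂ a b → M a b = 0}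
  add_mem' := by intro x y hx hy a b h; simp [Matrix.add_apply, hx a b h, hy a b h]
  zero_mem' := by intro a b h; simp
  smul_mem' := by intro c x hx a b h; simp [Matrix.smul_apply, hx a b h]

noncomputable def WsubEquiv (k m₁ m₂ : ℕ) :
    Wsub k m₁ m₂ ≃ₗ[ℝ] ({p : (Fin m₂ → Fin k) × (Fin m₁ → Fin k) // Pok m₁ m₂ p.1 p.2} → ℝ) where
  toFun M x := M.1 x.1.1 x.1.2
  map_add' x y := rfl
  map_smul' c x := rfl
  invFun g := ⟨fun a b => if h : Pok m₁ m₂ a b then g ⟨(a, b), h⟩ else 0, by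
    intro a b h
    exact dif_neg h⟩
  left_inv := by
    intro M
    apply Subtype.ext
    funext a b
    show (if h : Pok m₁ m₂ a b then M.1 a b else 0) = M.1 a b
    by_cases h : Pok m₁ m₂ a b
    · exact dif_pos h
    · rw [dif_neg h, M.2 a b h]
  right_inv := by
    intro g
    funext x
    show (if h : Pok m₁ m₂ x.1.1 x.1.2 then g ⟨(x.1.1, x.1.2), h⟩ else 0) = g x
    exact dif_pos x.2

lemma mem_signEquivMaps_iff {k m₁ m₂ : ℕ}
    (L : ((Fin m₁ → Fin k) → ℝ) →ₗ[ℝ] ((Fin m₂ → Fin k) → ℝ)) :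
    L ∈ signEquivMaps k m₁ m₂ ↔ LinearMap.toMatrix' L ∈ Wsub k m₁ m₂ := by
  have hrep : ∀ (V : (Fin m₁ → Fin k) → ℝ) (a : Fin m₂ → Fin k),
      L V a = ∑ b, (LinearMap.toMatrix' L) a b * V b := by
    intro V a
    conv_lhs => rw [← Matrix.toLin'_toMatrix' L]
    rw [Matrix.toLin'_apply]
    simp [Matrix.mulVec, dotProduct]
  constructor
  · intro hL a b hP
    simp only [Pok, not_forall] at hP
    obtain ⟨s, hs, hne⟩ := hP
    set V : (Fin m₁ → Fin k) → ℝ := fun j' => if j' = b then 1 else 0 with hV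
    have hact : signTensorAction s V = (∏ t, s (b t)) • V := by
      funext idx
      by_cases hidx : idx = b <;> simp [signTensorAction, V, hidx]
    have h1 := hL s hs V
    rw [hact, map_smul] at h1
    have h2 := congrFun h1 a
    simp only [Pi.smul_apply, smul_eq_mul, signTensorAction] at h2
    rw [LinearMap.toMatrix'_apply]
    have h3 : ((∏ t, s (b t)) - (∏ t, s (a t))) * L V a = 0 := by linarith [h2]
    rcases mul_eq_zero.mp h3 with h4 | h4
    · exact absurd (by linarith : (∏ t, s (a t)) = ∏ t, s (b t)) hne
    · rw [show (Pi.single b 1 : (Fin m₁ → Fin k) → ℝ) = V from by funext j'; simp [V, Pi.single_apply]]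
      exact h4
  · intro hM s hs V
    funext a
    show L (signTensorAction s V) a = _
    rw [hrep]
    have hR : signTensorAction s (L V) a
        = ∑ b, (∏ t, s (a t)) * ((LinearMap.toMatrix' L) a b * V b) := by
      show (∏ t, s (a t)) * L V a = _
      rw [hrep, Finset.mul_sum]
    rw [hR]
    apply Finset.sum_congr rfl
    intro b _
    by_cases hP : Pok m₁ m₂ a b
    · have hab := hP s hs
      show (LinearMap.toMatrix' L) a b * ((∏ t, s (b t)) * V b) = _
      rw [← hab]; ring
    · rw [hM a b hP]
      show (0 : ℝ) * signTensorAction s V b = (∏ t, s (a t)) * (0 * V b)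
      ring

lemma finrank_eq_card (k m₁ m₂ : ℕ) :
    Module.finrank ℝ (signEquivMaps k m₁ m₂)
      = Fintype.card {p : (Fin m₂ → Fin k) × (Fin m₁ → Fin k) // Pok m₁ m₂ p.1 p.2} := by
  have hmap : Submodule.map
      ((LinearMap.toMatrix' :
        (((Fin m₁ → Fin k) → ℝ) →ₗ[ℝ] ((Fin m₂ → Fin k) → ℝ)) ≃ₗ[ℝ]
          Matrix (Fin m₂ → Fin k) (Fin m₁ → Fin k) ℝ) :
        (((Fin m₁ → Fin k) → ℝ) →ₗ[ℝ] ((Fin m₂ → Fin k) → ℝ)) →ₗ[ℝ]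
          Matrix (Fin m₂ → Fin k) (Fin m₁ → Fin k) ℝ)
      (signEquivMaps k m₁ m₂) = Wsub k m₁ m₂ := by
    ext M
    rw [Submodule.mem_map_equiv, mem_signEquivMaps_iff]
    rw [LinearEquiv.apply_symm_apply]
  have h1 : Module.finrank ℝ (signEquivMaps k m₁ m₂) = Module.finrank ℝ (Wsub k m₁ m₂) := by
    rw [← hmap, LinearEquiv.finrank_map_eq]
  rw [h1, (WsubEquiv k m₁ m₂).finrank_eq, Module.finrank_fintype_fun_eq_card]

/-- The dimension of the space of sign equivariant linear maps from
`ℝ^(k^{m₁})` to `ℝ^(k^{m₂})` equals `(1/2^k) Σ_{s ∈ {-1,1}^k} (s₁+⋯+s_k)^{m₁+m₂}`. -/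
theorem stmt8 (k m₁ m₂ : ℕ) :
    (Module.finrank ℝ (signEquivMaps k m₁ m₂) : ℝ)
      = (1 / 2 ^ k) *
        ∑ s ∈ Fintype.piFinset (fun _ : Fin k => ({-1, 1} : Finset ℝ)),
          (∑ i : Fin k, s i) ^ (m₁ + m₂) := by
  rw [finrank_eq_card]
  have hpow : ∀ s : Fin k → ℝ, (∑ i, s i) ^ (m₁ + m₂)
      = ∑ p : (Fin m₂ → Fin k) × (Fin m₁ → Fin k), (∏ t, s (p.1 t)) * (∏ t, s (p.2 t)) := by
    intro s
    rw [pow_add, mul_comm, Fintype.sum_pow s m₁, Fintype.sum_pow s m₂,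
      Finset.sum_mul_sum, Fintype.sum_prod_type]
  have hsum : ∑ s ∈ Fintype.piFinset (fun _ : Fin k => ({-1, 1} : Finset ℝ)),
      (∑ i, s i) ^ (m₁ + m₂)
      = (Fintype.card {p : (Fin m₂ → Fin k) × (Fin m₁ → Fin k) // Pok m₁ m₂ p.1 p.2} : ℝ)
        * 2 ^ k := by
    rw [Finset.sum_congr rfl (fun s _ => hpow s), Finset.sum_comm]
    have hin : ∀ p : (Fin m₂ → Fin k) × (Fin m₁ → Fin k),
        ∑ s ∈ Fintype.piFinset (fun _ : Fin k => ({-1, 1} : Finset ℝ)),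
          (∏ t, s (p.1 t)) * (∏ t, s (p.2 t))
        = if Pok m₁ m₂ p.1 p.2 then (2 : ℝ) ^ k else 0 := by
      intro p
      by_cases h : Pok m₁ m₂ p.1 p.2
      · rw [if_pos h]; exact char_sum_of_P p.1 p.2 h
      · rw [if_neg h]; exact char_sum_of_notP p.1 p.2 h
    rw [Finset.sum_congr rfl (fun p _ => hin p), ← Finset.sum_filter, Finset.sum_const,
      nsmul_eq_mul, Fintype.card_subtype]
  rw [hsum]
  have h2 : (2 : ℝ) ^ k ≠ 0 := by positivity
  field_simp
end

section
/- Let A be an n×n real symmetric matrix, let v₁,...,v_k be orthonormal eigenvectors of A with distinct (simple) eigenvalues λ₁,...,λ_k, and let P be a permutation matrix with PAP^T = A and Pe_i = e_j. If f: ℝ^(n×k) → ℝ^(n×d) is permutation equivariant (f(QV) = Qf(V) for all permutation matrices Q) and sign invariant (f(VS) = f(V) for all S ∈ diag({-1,1}^k)), then the i-th and j-th rows of f(V) coincide, where V = [v₁,...,v_k]. -/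
open scoped Matrix

/-- Let `A` be symmetric with orthonormal eigenvectors (the columns of
`V`) for distinct simple eigenvalues `μ`, and `P` a permutation matrix automorphism of
`A` mapping `e_i` to `e_j`. If `f` is permutation equivariant and sign invariant, then
rows `i` and `j` of `f(V)` coincide. -/
theorem stmt10 (n k d : ℕ) (A : Matrix (Fin n) (Fin n) ℝ) (hA : A.IsSymm)
    (V : Matrix (Fin n) (Fin k) ℝ) (μ : Fin k → ℝ)
    (heig : ∀ l : Fin k, A.mulVec (fun i => V i l) = μ l • (fun i => V i l))
    (horth : ∀ l m : Fin k, (∑ i : Fin n, V i l * V i m) = if l = m then 1 else 0)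
    (hdistinct : Function.Injective μ)
    (hsimple : ∀ (l : Fin k) (w : Fin n → ℝ), A.mulVec w = μ l • w →
      ∃ c : ℝ, w = c • (fun i => V i l))
    (P : Matrix (Fin n) (Fin n) ℝ)
    (hP : ∃ σ : Equiv.Perm (Fin n), P = σ.permMatrix ℝ)
    (hPA : P * A * Pᵀ = A)
    (i j : Fin n) (hij : P.mulVec (Pi.single i 1) = Pi.single j 1)
    (f : Matrix (Fin n) (Fin k) ℝ → Matrix (Fin n) (Fin d) ℝ)
    (hperm : ∀ (Q : Matrix (Fin n) (Fin n) ℝ),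
      (∃ σ : Equiv.Perm (Fin n), Q = σ.permMatrix ℝ) →
      ∀ X, f (Q * X) = Q * f X)
    (hsign : ∀ (s : Fin k → ℝ), (∀ l, s l = 1 ∨ s l = -1) →
      ∀ X, f (X * Matrix.diagonal s) = f X) :
    ∀ l : Fin d, f V i l = f V j l := by
  obtain ⟨σ, rfl⟩ := hP
  have hent : ∀ a b : Fin n, (σ.permMatrix ℝ) a b = if σ a = b then 1 else 0 := by
    intro a b
    simp [PEquiv.toMatrix_apply, Equiv.toPEquiv_apply, Option.mem_def]
  have hmul : ∀ {m : ℕ} (X : Matrix (Fin n) (Fin m) ℝ) (a : Fin n) (b : Fin m),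
      ((σ.permMatrix ℝ) * X) a b = X (σ a) b := by
    intro m X a b
    rw [PEquiv.toMatrix_toPEquiv_mul]
    rfl
  have hmv : ∀ (w : Fin n → ℝ) (a : Fin n), (σ.permMatrix ℝ).mulVec w a = w (σ a) := by
    intro w a
    simp only [Matrix.mulVec, dotProduct, hent, ite_mul, one_mul, zero_mul]
    rw [Finset.sum_ite_eq (Finset.univ) (σ a) w]
    simp
  have hσj : σ j = i := by
    have h := congrFun hij j
    rw [hmv] at h
    simp only [Pi.single_apply, if_pos rfl] at h
    by_contra hne
    rw [if_neg hne] at h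
    exact zero_ne_one h
  have hPtP : (σ.permMatrix ℝ)ᵀ * (σ.permMatrix ℝ) = 1 := by
    rw [← PEquiv.toMatrix_symm, ← Equiv.toPEquiv_symm, ← PEquiv.toMatrix_trans,
      ← Equiv.toPEquiv_trans]
    simp
  have hcomm : A * (σ.permMatrix ℝ) = (σ.permMatrix ℝ) * A := by
    have h := congrArg (fun M => M * (σ.permMatrix ℝ)) hPA
    simp only [Matrix.mul_assoc, hPtP, Matrix.mul_one] at h
    exact h.symm
  have key : ∀ l : Fin k, ∃ c : ℝ, (c = 1 ∨ c = -1) ∧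
      ∀ a, V (σ a) l = c * V a l := by
    intro l
    have heig' : A.mulVec ((σ.permMatrix ℝ).mulVec (fun i => V i l))
        = μ l • ((σ.permMatrix ℝ).mulVec (fun i => V i l)) := by
      rw [Matrix.mulVec_mulVec, hcomm, ← Matrix.mulVec_mulVec, heig l,
        Matrix.mulVec_smul]
    obtain ⟨c, hc⟩ := hsimple l _ heig'
    have hval : ∀ a, V (σ a) l = c * V a l := by
      intro a
      have h := congrFun hc a
      rw [hmv] at h
      simpa using h
    refine ⟨c, ?_, hval⟩
    have h1 : (∑ a : Fin n, V (σ a) l * V (σ a) l) = 1 := by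
      rw [Fintype.sum_equiv σ _ (fun a => V a l * V a l) (fun a => rfl)]
      simpa using horth l l
    have h2 : (∑ a : Fin n, V (σ a) l * V (σ a) l) = c * c := by
      calc (∑ a : Fin n, V (σ a) l * V (σ a) l)
          = ∑ a : Fin n, c * c * (V a l * V a l) := by
            exact Finset.sum_congr rfl fun a _ => by rw [hval a]; ring
        _ = c * c * ∑ a : Fin n, V a l * V a l := by rw [Finset.mul_sum]
        _ = c * c := by rw [horth l l]; simp
    exact mul_self_eq_one_iff.mp (by rw [← h2, h1])
  choose s hs1 hs2 using key
  have hPV : (σ.permMatrix ℝ) * V = V * Matrix.diagonal s := by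
    ext a l
    rw [hmul, Matrix.mul_diagonal, hs2 l a]
    ring
  have hfix : (σ.permMatrix ℝ) * f V = f V := by
    rw [← hperm _ ⟨σ, rfl⟩ V, hPV, hsign s hs1 V]
  intro l
  have h := congrFun (congrFun hfix j) l
  rw [hmul, hσj] at h
  exact h
end

section
/- Let 𝒳 ⊆ ℝ^(n×k) be a set closed under right multiplication by O(k), such that every X ∈ 𝒳 has cov(X) with distinct eigenvalues, and for each X let R_X ∈ O(k) be a choice of orthonormal eigenvector matrix of cov(X) (ordered by eigenvalue). If h: 𝒳 → ℝ^(n×k) is sign equivariant (h(XS) = h(X)S for all S ∈ diag({-1,1}^k)), then f(X) := h(XR_X)R_X^T is well-defined (independent of the sign choices in R_X) and orthogonally equivariant: f(XQ) = f(X)Q for all Q ∈ O(k). -/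
open scoped Matrix

/-- Centered covariance `cov(X) = (X - (1/n)𝟙𝟙ᵀX)ᵀ (X - (1/n)𝟙𝟙ᵀX)`. -/
noncomputable def cov {n k : ℕ} (X : Matrix (Fin n) (Fin k) ℝ) :
    Matrix (Fin k) (Fin k) ℝ :=
  (X - ((1 : ℝ) / n) • (Matrix.of (fun _ _ => (1 : ℝ)) * X))ᵀ *
    (X - ((1 : ℝ) / n) • (Matrix.of (fun _ _ => (1 : ℝ)) * X))

lemma strictMono_eq_of_comm {k : ℕ} (μ ν : Fin k → ℝ) (C : Matrix (Fin k) (Fin k) ℝ)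
    (hμ : StrictMono μ) (hν : StrictMono ν)
    (hent : ∀ m l, C m l * ν l = μ m * C m l)
    (hcol : ∀ l, ∃ m, C m l ≠ 0) (hrow : ∀ m, ∃ l, C m l ≠ 0) : ν = μ := by
  have hex1 : ∀ l, ∃ m, ν l = μ m := by
    intro l
    obtain ⟨m, hm⟩ := hcol l
    exact ⟨m, mul_left_cancel₀ hm (by rw [hent m l]; ring)⟩
  have hex2 : ∀ m, ∃ l, μ m = ν l := by
    intro m
    obtain ⟨l, hl⟩ := hrow m
    exact ⟨l, (mul_left_cancel₀ hl (by rw [hent m l]; ring)).symm⟩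
  choose σ hσ using hex1
  choose τ hτ using hex2
  have hσm : StrictMono σ := fun a b hab => hμ.lt_iff_lt.mp (by rw [← hσ, ← hσ]; exact hν hab)
  have hτm : StrictMono τ := fun a b hab => hν.lt_iff_lt.mp (by rw [← hτ, ← hτ]; exact hμ hab)
  have hts : ∀ l, τ (σ l) = l := fun l => hν.injective (by rw [← hτ (σ l), ← hσ l])
  have _ : WellFoundedLT (Fin k) := inferInstance
  have hle : ∀ l, l ≤ σ l := fun l => hσm.le_apply (x := l)
  have hle2 : ∀ l, σ l ≤ l := fun l => by
    calc σ l ≤ τ (σ l) := hτm.le_apply (x := σ l)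
    _ = l := hts l
  funext l
  rw [hσ l, le_antisymm (hle2 l) (hle l)]

lemma key {k : ℕ} (A R R' : Matrix (Fin k) (Fin k) ℝ) (μ ν : Fin k → ℝ)
    (hA : Aᵀ = A) (hRo : Rᵀ * R = 1) (hR'o : R'ᵀ * R' = 1)
    (hAR : A * R = R * Matrix.diagonal μ) (hAR' : A * R' = R' * Matrix.diagonal ν)
    (hμ : StrictMono μ) (hν : StrictMono ν) :
    ∃ s : Fin k → ℝ, (∀ j, s j = 1 ∨ s j = -1) ∧ R' = R * Matrix.diagonal s := by
  have hRR : R * Rᵀ = 1 := mul_eq_one_comm.mp hRo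
  have hR'R' : R' * R'ᵀ = 1 := mul_eq_one_comm.mp hR'o
  set C := Rᵀ * R' with hC
  have hCtC : Cᵀ * C = 1 := by
    rw [hC, Matrix.transpose_mul, Matrix.transpose_transpose, Matrix.mul_assoc,
      ← Matrix.mul_assoc R, hRR, Matrix.one_mul, hR'o]
  have hCCt : C * Cᵀ = 1 := mul_eq_one_comm.mp hCtC
  have hcomm : C * Matrix.diagonal ν = Matrix.diagonal μ * C := by
    have h1 : Rᵀ * (A * R') = C * Matrix.diagonal ν := by
      rw [hAR', ← Matrix.mul_assoc, hC]
    have h2 : Rᵀ * (A * R') = Matrix.diagonal μ * C := by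
      rw [← Matrix.mul_assoc, ← hA, ← Matrix.transpose_mul, hAR, Matrix.transpose_mul,
        Matrix.diagonal_transpose, Matrix.mul_assoc, hC]
    rw [← h1, h2]
  have hent : ∀ m l, C m l * ν l = μ m * C m l := by
    intro m l
    have := congrFun (congrFun hcomm m) l
    simpa [Matrix.mul_diagonal, Matrix.diagonal_mul] using this
  have hcolsum : ∀ l, (∑ m, C m l * C m l) = 1 := by
    intro l
    have := congrFun (congrFun hCtC l) l
    simpa [Matrix.mul_apply, Matrix.transpose_apply, Matrix.one_apply] using this
  have hrowsum : ∀ m, (∑ l, C m l * C m l) = 1 := by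
    intro m
    have := congrFun (congrFun hCCt m) m
    simpa [Matrix.mul_apply, Matrix.transpose_apply, Matrix.one_apply] using this
  have hcol : ∀ l, ∃ m, C m l ≠ 0 := by
    intro l
    by_contra hcon
    push_neg at hcon
    have := hcolsum l
    simp only [hcon, mul_zero, Finset.sum_const_zero] at this
    exact zero_ne_one this
  have hrow : ∀ m, ∃ l, C m l ≠ 0 := by
    intro m
    by_contra hcon
    push_neg at hcon
    have := hrowsum m
    simp only [hcon, mul_zero, Finset.sum_const_zero] at this
    exact zero_ne_one this
  have hνμ : ν = μ := strictMono_eq_of_comm μ ν C hμ hν hent hcol hrow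
  subst hνμ
  have hoff : ∀ m l, m ≠ l → C m l = 0 := by
    intro m l hml
    by_contra hc
    exact hml (hν.injective (mul_left_cancel₀ hc (by rw [hent m l]; ring))).symm
  have hdiag : C = Matrix.diagonal (fun j => C j j) := by
    ext m l
    rcases eq_or_ne m l with rfl | hml
    · simp [Matrix.diagonal]
    · simp [Matrix.diagonal_apply_ne _ hml, hoff m l hml]
  refine ⟨fun j => C j j, ?_, ?_⟩
  · intro j
    rw [← mul_self_eq_one_iff]
    have := hcolsum j
    rwa [Finset.sum_eq_single j (fun m _ hm => by rw [hoff m j hm, mul_zero])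
      (fun hj => absurd (Finset.mem_univ j) hj)] at this
  · rw [← hdiag, hC, ← Matrix.mul_assoc, hRR, Matrix.one_mul]

lemma eig_matrix {k : ℕ} (A : Matrix (Fin k) (Fin k) ℝ) (R : Matrix (Fin k) (Fin k) ℝ)
    (μ : Fin k → ℝ)
    (hv : ∀ l : Fin k, A.mulVec (fun i => R i l) = μ l • (fun i => R i l)) :
    A * R = R * Matrix.diagonal μ := by
  ext i l
  have := congrFun (hv l) i
  simp only [Matrix.mulVec, dotProduct, Pi.smul_apply, smul_eq_mul] at this
  rw [Matrix.mul_apply, Matrix.mul_diagonal, this, mul_comm]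

lemma cov_symm {n k : ℕ} (X : Matrix (Fin n) (Fin k) ℝ) : (cov X)ᵀ = cov X := by
  rw [cov, Matrix.transpose_mul, Matrix.transpose_transpose]

lemma cov_mul {n k : ℕ} (X : Matrix (Fin n) (Fin k) ℝ) (Q : Matrix (Fin k) (Fin k) ℝ) :
    cov (X * Q) = Qᵀ * cov X * Q := by
  have hM : (X * Q - ((1 : ℝ) / n) • (Matrix.of (fun _ _ => (1 : ℝ)) * (X * Q)))
      = (X - ((1 : ℝ) / n) • (Matrix.of (fun _ _ => (1 : ℝ)) * X)) * Q := by
    rw [Matrix.sub_mul, Matrix.smul_mul]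
    exact congrArg (fun M => X * Q - ((1 : ℝ) / n) • M) (Matrix.mul_assoc _ _ _).symm
  rw [cov, hM, Matrix.transpose_mul, cov]
  simp [Matrix.mul_assoc]

lemma diag_sq_one {k : ℕ} (s : Fin k → ℝ) (hs : ∀ j, s j = 1 ∨ s j = -1) :
    Matrix.diagonal s * Matrix.diagonal s = (1 : Matrix (Fin k) (Fin k) ℝ) := by
  rw [Matrix.diagonal_mul_diagonal]
  have : (fun j => s j * s j) = fun _ => (1 : ℝ) := by
    funext j; rcases hs j with h | h <;> rw [h] <;> ring
  rw [this, Matrix.diagonal_one]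

/-- Let `𝒳` be closed under right multiplication by `O(k)`, with each
`cov X` (for `X ∈ 𝒳`) having distinct eigenvalues `μ X 0 < μ X 1 < ⋯`, and let
`R, R'` be two choices of orthonormal eigenvector matrices of `cov X` ordered by
eigenvalue. If `h` is sign equivariant on `𝒳`, then `f(X) = h(X R_X) R_Xᵀ` is
well-defined (independent of the choice) and orthogonally equivariant. -/
theorem stmt14 (n k : ℕ) (𝒳 : Set (Matrix (Fin n) (Fin k) ℝ))
    (hclosed : ∀ X ∈ 𝒳, ∀ Q : Matrix (Fin k) (Fin k) ℝ, Qᵀ * Q = 1 → X * Q ∈ 𝒳)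
    (μ : Matrix (Fin n) (Fin k) ℝ → Fin k → ℝ)
    (hμ : ∀ X ∈ 𝒳, StrictMono (μ X))
    (R R' : Matrix (Fin n) (Fin k) ℝ → Matrix (Fin k) (Fin k) ℝ)
    (hR : ∀ X ∈ 𝒳, (R X)ᵀ * R X = 1 ∧
      ∀ l : Fin k, (cov X).mulVec (fun i => R X i l) = μ X l • (fun i => R X i l))
    (hR' : ∀ X ∈ 𝒳, (R' X)ᵀ * R' X = 1 ∧
      ∀ l : Fin k, (cov X).mulVec (fun i => R' X i l) = μ X l • (fun i => R' X i l))
    (h : Matrix (Fin n) (Fin k) ℝ → Matrix (Fin n) (Fin k) ℝ)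
    (hsign : ∀ X ∈ 𝒳, ∀ s : Fin k → ℝ, (∀ j, s j = 1 ∨ s j = -1) →
      h (X * Matrix.diagonal s) = h X * Matrix.diagonal s) :
    (∀ X ∈ 𝒳, h (X * R' X) * (R' X)ᵀ = h (X * R X) * (R X)ᵀ) ∧
    (∀ X ∈ 𝒳, ∀ Q : Matrix (Fin k) (Fin k) ℝ, Qᵀ * Q = 1 →
      h ((X * Q) * R (X * Q)) * (R (X * Q))ᵀ = (h (X * R X) * (R X)ᵀ) * Q) := by
  constructor
  · intro X hX
    obtain ⟨hRo, hRv⟩ := hR X hX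
    obtain ⟨hR'o, hR'v⟩ := hR' X hX
    obtain ⟨s, hs, hss⟩ := key (cov X) (R X) (R' X) (μ X) (μ X) (cov_symm X) hRo hR'o
      (eig_matrix _ _ _ hRv) (eig_matrix _ _ _ hR'v) (hμ X hX) (hμ X hX)
    have hXR : X * R X ∈ 𝒳 := hclosed X hX (R X) hRo
    rw [hss, Matrix.transpose_mul, Matrix.diagonal_transpose, ← Matrix.mul_assoc X,
      hsign (X * R X) hXR s hs, Matrix.mul_assoc (h (X * R X)), ← Matrix.mul_assoc
      (Matrix.diagonal s), diag_sq_one s hs, Matrix.one_mul]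
  · intro X hX Q hQ
    obtain ⟨hRo, hRv⟩ := hR X hX
    have hXQ : X * Q ∈ 𝒳 := hclosed X hX Q hQ
    obtain ⟨hRo', hRv'⟩ := hR (X * Q) hXQ
    have hQQ : Q * Qᵀ = 1 := mul_eq_one_comm.mp hQ
    -- Qᵀ * R X is an orthonormal eigenvector matrix for cov (X * Q)
    have hBo : (Qᵀ * R X)ᵀ * (Qᵀ * R X) = 1 := by
      rw [Matrix.transpose_mul, Matrix.transpose_transpose, Matrix.mul_assoc,
        ← Matrix.mul_assoc Q, hQQ, Matrix.one_mul, hRo]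
    have hBe : cov (X * Q) * (Qᵀ * R X) = (Qᵀ * R X) * Matrix.diagonal (μ X) := by
      rw [cov_mul, Matrix.mul_assoc (Qᵀ * cov X), ← Matrix.mul_assoc Q, hQQ,
        Matrix.one_mul, Matrix.mul_assoc, eig_matrix _ _ _ hRv, Matrix.mul_assoc]
    obtain ⟨s, hs, hss⟩ := key (cov (X * Q)) (Qᵀ * R X) (R (X * Q)) (μ X) (μ (X * Q))
      (cov_symm _) hBo hRo' hBe (eig_matrix _ _ _ hRv') (hμ X hX) (hμ (X * Q) hXQ)
    have hXR : X * R X ∈ 𝒳 := hclosed X hX (R X) hRo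
    have harg : X * Q * R (X * Q) = (X * R X) * Matrix.diagonal s := by
      rw [hss]
      simp only [← Matrix.mul_assoc]
      rw [Matrix.mul_assoc X Q Qᵀ, hQQ, Matrix.mul_one]
    rw [harg, hsign (X * R X) hXR s hs, hss]
    rw [Matrix.transpose_mul, Matrix.transpose_mul, Matrix.diagonal_transpose,
      Matrix.transpose_transpose]
    rw [Matrix.mul_assoc (h (X * R X)), ← Matrix.mul_assoc (Matrix.diagonal s),
      ← Matrix.mul_assoc (Matrix.diagonal s * Matrix.diagonal s), diag_sq_one s hs,
      Matrix.one_mul, Matrix.mul_assoc (h (X * R X)), ← Matrix.mul_assoc]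
end

section
/- If f_target: 𝒳 → ℝ^(n×k) is O(k)-equivariant on a set 𝒳 ⊆ ℝ^(n×k) (where each cov(X) has distinct eigenvalues and 𝒳 is closed under O(k)), and h: 𝒳 → ℝ^(n×k) is sign equivariant with ‖h(X) - f_target(X)‖_F < ε for all X ∈ 𝒳, then f(X) := h(XR_X)R_X^T satisfies ‖f(X) - f_target(X)‖_F < ε for all X ∈ 𝒳. -/
open scoped Matrix

/-- Frobenius norm of a real matrix. -/
noncomputable def frobNorm {n k : ℕ} (A : Matrix (Fin n) (Fin k) ℝ) : ℝ :=
  Real.sqrt (∑ i : Fin n, ∑ j : Fin k, (A i j) ^ 2)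

lemma frob_mul_orth {n k : ℕ} (A : Matrix (Fin n) (Fin k) ℝ)
    (Q : Matrix (Fin k) (Fin k) ℝ) (hQ : Q * Qᵀ = 1) :
    frobNorm (A * Q) = frobNorm A := by
  have key : ∀ B : Matrix (Fin n) (Fin k) ℝ,
      ∑ i : Fin n, ∑ j : Fin k, (B i j) ^ 2 = (B * Bᵀ).trace := by
    intro B
    simp [Matrix.trace, Matrix.mul_apply, Matrix.diag, sq]
  unfold frobNorm
  rw [key, key, Matrix.transpose_mul, show A * Q * (Qᵀ * Aᵀ) = A * (Q * Qᵀ) * Aᵀ by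
    simp [Matrix.mul_assoc], hQ, Matrix.mul_one]

/-- If `f_target` is `O(k)`-equivariant on `𝒳` (closed under `O(k)`,
each `cov X` having distinct eigenvalues), `h` is sign equivariant, and
`‖h X - f_target X‖_F < ε` on `𝒳`, then `f(X) = h(X R_X) R_Xᵀ` satisfies
`‖f X - f_target X‖_F < ε` on `𝒳`. -/
theorem stmt15 (n k : ℕ) (𝒳 : Set (Matrix (Fin n) (Fin k) ℝ)) (ε : ℝ)
    (hclosed : ∀ X ∈ 𝒳, ∀ Q : Matrix (Fin k) (Fin k) ℝ, Qᵀ * Q = 1 → X * Q ∈ 𝒳)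
    (R : Matrix (Fin n) (Fin k) ℝ → Matrix (Fin k) (Fin k) ℝ)
    (hRorth : ∀ X ∈ 𝒳, (R X)ᵀ * R X = 1 ∧ R X * (R X)ᵀ = 1)
    (hReig : ∀ X ∈ 𝒳, ∃ μ : Fin k → ℝ, Function.Injective μ ∧
      ∀ l : Fin k, (cov X).mulVec (fun i => R X i l) = μ l • (fun i => R X i l))
    (ftarget : Matrix (Fin n) (Fin k) ℝ → Matrix (Fin n) (Fin k) ℝ)
    (hft : ∀ X ∈ 𝒳, ∀ Q : Matrix (Fin k) (Fin k) ℝ, Qᵀ * Q = 1 →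
      ftarget (X * Q) = ftarget X * Q)
    (h : Matrix (Fin n) (Fin k) ℝ → Matrix (Fin n) (Fin k) ℝ)
    (hsign : ∀ X ∈ 𝒳, ∀ s : Fin k → ℝ, (∀ j, s j = 1 ∨ s j = -1) →
      h (X * Matrix.diagonal s) = h X * Matrix.diagonal s)
    (happrox : ∀ X ∈ 𝒳, frobNorm (h X - ftarget X) < ε) :
    ∀ X ∈ 𝒳, frobNorm (h (X * R X) * (R X)ᵀ - ftarget X) < ε := by
  intro X hX
  obtain ⟨hQt, hQ⟩ := hRorth X hX
  have hmem : X * R X ∈ 𝒳 := hclosed X hX (R X) hQt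
  have h1 := happrox (X * R X) hmem
  rw [hft X hX (R X) hQt] at h1
  have h2 : (h (X * R X) - ftarget X * R X) * (R X)ᵀ
      = h (X * R X) * (R X)ᵀ - ftarget X := by
    rw [Matrix.sub_mul, Matrix.mul_assoc, hQ, Matrix.mul_one]
  have h3 : (R X)ᵀ * ((R X)ᵀ)ᵀ = 1 := by rwa [Matrix.transpose_transpose]
  calc frobNorm (h (X * R X) * (R X)ᵀ - ftarget X)
      = frobNorm ((h (X * R X) - ftarget X * R X) * (R X)ᵀ) := by rw [h2]
    _ = frobNorm (h (X * R X) - ftarget X * R X) := frob_mul_orth _ _ h3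
    _ < ε := h1
end
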